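/- For every index m and every θ ∈ ℝ, the jump of the squared speed across the m-th spiral satisfies |W^R(θ)|² − |W^L(θ)|² = −(4 a² g_m e^{2a(θ−θ_m)}/(a²+1)) · Re( (1/sinh(πA)) · Σ_{k=0}^{M−1} 𝒜_{mk} g_k ). -/

import Mathlib

/-- The complex constant `A := −2ai/(a+i)`. -/
noncomputable def Aconst (a : ℝ) : ℂ := -2 * (a : ℂ) * Complex.I / ((a : ℂ) + Complex.I)

/-- The matrix coefficient
`𝒜_{mk} := e^{A(θ_k−θ_m)} · (e^{−πA)` if `k > m`, `cosh(πA)` if `k = m`, `e^{πA}` if `k < m)`. -/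
noncomputable def Amat (a : ℝ) (M : ℕ) (θs : Fin M → ℝ) (m k : Fin M) : ℂ :=
  Complex.exp (Aconst a * ((θs k : ℂ) - (θs m : ℂ))) *
    (if m < k then Complex.exp (-(Real.pi : ℂ) * Aconst a)
     else if k = m then Complex.cosh ((Real.pi : ℂ) * Aconst a)
     else Complex.exp ((Real.pi : ℂ) * Aconst a))

/-- The limit velocity profile on the `m`-th spiral from the right:
`W^R(θ) := e^{iθ} Σ_k (2a g_k/(e^{a(θ−θ_m)}(a−i))) ·
conj( exp((2a/(a+i))·a(θ−θ_m)) e^{A(θ_k−θ)} e^{2πχ_{k<m}A}/(1−e^{2πA}) )`. -/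
noncomputable def WR (a : ℝ) (M : ℕ) (g θs : Fin M → ℝ) (m : Fin M) (θ : ℝ) : ℂ :=
  Complex.exp (Complex.I * (θ : ℂ)) * ∑ k : Fin M,
    (2 * (a : ℂ) * (g k : ℂ) /
        ((Real.exp (a * (θ - θs m)) : ℂ) * ((a : ℂ) - Complex.I))) *
      (starRingEnd ℂ)
        (Complex.exp ((2 * (a : ℂ) / ((a : ℂ) + Complex.I)) * ((a * (θ - θs m) : ℝ) : ℂ)) *
          Complex.exp (Aconst a * ((θs k : ℂ) - (θ : ℂ))) *
          (Complex.exp (2 * (Real.pi : ℂ) * (if k < m then 1 else 0) * Aconst a) /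
            (1 - Complex.exp (2 * (Real.pi : ℂ) * Aconst a))))

/-- The limit velocity profile on the `m`-th spiral from the left: as `WR` but with the
indicator of `k < m` replaced by the indicator of `k ≤ m`. -/
noncomputable def WL (a : ℝ) (M : ℕ) (g θs : Fin M → ℝ) (m : Fin M) (θ : ℝ) : ℂ :=
  Complex.exp (Complex.I * (θ : ℂ)) * ∑ k : Fin M,
    (2 * (a : ℂ) * (g k : ℂ) /
        ((Real.exp (a * (θ - θs m)) : ℂ) * ((a : ℂ) - Complex.I))) *
      (starRingEnd ℂ)
        (Complex.exp ((2 * (a : ℂ) / ((a : ℂ) + Complex.I)) * ((a * (θ - θs m) : ℝ) : ℂ)) *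
          Complex.exp (Aconst a * ((θs k : ℂ) - (θ : ℂ))) *
          (Complex.exp (2 * (Real.pi : ℂ) * (if k ≤ m then 1 else 0) * Aconst a) /
            (1 - Complex.exp (2 * (Real.pi : ℂ) * Aconst a))))

/- ---------------- auxiliary lemmas ---------------- -/

lemma jump_abs_sq (z w : ℂ) :
    ‖z‖ ^ 2 - ‖w‖ ^ 2 = ((z - w) * (starRingEnd ℂ) (z + w)).re := by
  simp [Complex.sq_norm, Complex.normSq_apply, Complex.mul_re, Complex.sub_re, Complex.add_re,
    Complex.sub_im, Complex.add_im, Complex.conj_re, Complex.conj_im]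
  ring

lemma jump_alg1 (x s : ℂ) (hx : x ≠ 0) (h1 : 1 - x*x ≠ 0) (hs : s = (x - x⁻¹)/2)
    (hsne : s ≠ 0) : (x*x + x*x)/(1 - x*x) = -x/s := by
  rw [div_eq_div_iff h1 hsne, hs]; field_simp; ring

lemma jump_alg2 (x s : ℂ) (hx : x ≠ 0) (h1 : 1 - x*x ≠ 0) (hs : s = (x - x⁻¹)/2)
    (hsne : s ≠ 0) : (1 + x*x)/(1 - x*x) = -((x + x⁻¹)/2)/s := by
  rw [div_eq_div_iff h1 hsne, hs]; field_simp; ring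

lemma jump_alg3 (x s : ℂ) (hx : x ≠ 0) (h1 : 1 - x*x ≠ 0) (hs : s = (x - x⁻¹)/2)
    (hsne : s ≠ 0) : (1 + 1)/(1 - x*x) = -x⁻¹/s := by
  rw [div_eq_div_iff h1 hsne, hs]; field_simp; ring

lemma jump_core (a θ tm tk gm gk : ℝ) (ha : 0 < a) :
    (2*(a:ℂ)*(gm:ℂ)/((Real.exp (a*(θ-tm)) : ℂ)*((a:ℂ) - Complex.I))) *
    (starRingEnd ℂ) (2*(a:ℂ)*(gk:ℂ)/((Real.exp (a*(θ-tm)) : ℂ)*((a:ℂ) - Complex.I))) *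
    ((starRingEnd ℂ) (Complex.exp ((2*(a:ℂ)/((a:ℂ)+Complex.I)) * ((a*(θ-tm) : ℝ) : ℂ)) *
        Complex.exp (Aconst a * ((tm:ℂ) - (θ:ℂ)))) *
     (Complex.exp ((2*(a:ℂ)/((a:ℂ)+Complex.I)) * ((a*(θ-tm) : ℝ) : ℂ)) *
        Complex.exp (Aconst a * ((tk:ℂ) - (θ:ℂ))))) =
    ((4*a^2*gm*gk*Real.exp (2*a*(θ-tm))/(a^2+1) : ℝ) : ℂ) *
      Complex.exp (Aconst a * ((tk:ℂ) - (tm:ℂ))) := by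
  have haI : ((a:ℂ) + Complex.I) ≠ 0 := by
    intro h; have := congrArg Complex.im h; simp at this
  have haI' : ((a:ℂ) - Complex.I) ≠ 0 := by
    intro h; have := congrArg Complex.im h; simp at this
  simp only [map_mul, map_div₀, map_sub, map_ofNat, Complex.conj_ofReal, Complex.conj_I,
    ← Complex.exp_conj, map_add, Complex.ofReal_exp, Complex.ofReal_mul, Complex.ofReal_div,
    Complex.ofReal_pow, Complex.ofReal_ofNat, Complex.ofReal_one, Complex.ofReal_add,
    Complex.ofReal_sub, Aconst, map_neg]
  have haI2 : ((a:ℂ) + -Complex.I) ≠ 0 := by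
    intro h; have := congrArg Complex.im h; simp at this
  have ha1 : ((a:ℂ)^2 + 1) ≠ 0 := by
    have h : ((a:ℝ)^2 + 1) ≠ 0 := by positivity
    intro h2; apply h; exact_mod_cast h2
  field_simp [Complex.exp_ne_zero]
  have hZ : ((2*(a:ℂ)*((a:ℂ)*((θ:ℂ)-(tm:ℂ)))/((a:ℂ) + -Complex.I) +
      2*(a:ℂ)*Complex.I*((tm:ℂ)-(θ:ℂ))/((a:ℂ) + -Complex.I)) +
      (2*(a:ℂ)*((a:ℂ)*((θ:ℂ)-(tm:ℂ)))/((a:ℂ) + Complex.I) +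
      -(2*(a:ℂ)*Complex.I*((tk:ℂ)-(θ:ℂ)))/((a:ℂ) + Complex.I))) =
      ((2*(a:ℂ)*((θ:ℂ)-(tm:ℂ)) + -(2*(a:ℂ)*Complex.I*((tk:ℂ)-(tm:ℂ)))/((a:ℂ) + Complex.I)) +
      ((a:ℂ)*((θ:ℂ)-(tm:ℂ)) + (a:ℂ)*((θ:ℂ)-(tm:ℂ)))) := by
    field_simp
    ring
  have hE : Complex.exp (2*(a:ℂ)*((a:ℂ)*((θ:ℂ)-(tm:ℂ)))/((a:ℂ) + -Complex.I)) *
      Complex.exp (2*(a:ℂ)*Complex.I*((tm:ℂ)-(θ:ℂ))/((a:ℂ) + -Complex.I)) *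
      (Complex.exp (2*(a:ℂ)*((a:ℂ)*((θ:ℂ)-(tm:ℂ)))/((a:ℂ) + Complex.I)) *
       Complex.exp (-(2*(a:ℂ)*Complex.I*((tk:ℂ)-(θ:ℂ)))/((a:ℂ) + Complex.I))) =
      Complex.exp (2*(a:ℂ)*((θ:ℂ)-(tm:ℂ))) *
      Complex.exp (-(2*(a:ℂ)*Complex.I*((tk:ℂ)-(tm:ℂ)))/((a:ℂ) + Complex.I)) *
      (Complex.exp ((a:ℂ)*((θ:ℂ)-(tm:ℂ))) * Complex.exp ((a:ℂ)*((θ:ℂ)-(tm:ℂ)))) := by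
    simp only [← Complex.exp_add]
    exact congrArg Complex.exp hZ
  have hE2 : Complex.exp (2 * (a:ℂ) ^ 2 * ((θ:ℂ) - (tm:ℂ)) / ((a:ℂ) + -Complex.I)) *
      Complex.exp (2 * (a:ℂ) * Complex.I * ((tm:ℂ) - (θ:ℂ)) / ((a:ℂ) + -Complex.I)) *
      Complex.exp (2 * (a:ℂ) ^ 2 * ((θ:ℂ) - (tm:ℂ)) / ((a:ℂ) + Complex.I)) *
      Complex.exp (-(2 * (a:ℂ) * Complex.I * ((tk:ℂ) - (θ:ℂ)) / ((a:ℂ) + Complex.I))) =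
      Complex.exp (2*(a:ℂ)*((θ:ℂ)-(tm:ℂ))) *
      Complex.exp (-(2*(a:ℂ)*Complex.I*((tk:ℂ)-(tm:ℂ))/((a:ℂ) + Complex.I))) *
      Complex.exp ((a:ℂ)*((θ:ℂ)-(tm:ℂ))) ^ 2 := by
    simp only [pow_two (Complex.exp _), ← Complex.exp_add]
    congr 1
    field_simp
    ring
  rw [div_eq_iff (by rw [sub_neg_eq_add]; exact haI)]
  linear_combination (4*(a:ℂ)^2*(gm:ℂ)*(gk:ℂ)*((a:ℂ)^2+1)) * hE2 +
    (4*(a:ℂ)^2*(gm:ℂ)*(gk:ℂ)* Complex.exp (2*(a:ℂ)*((θ:ℂ)-(tm:ℂ))) *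
      Complex.exp (-(2*(a:ℂ)*Complex.I*((tk:ℂ)-(tm:ℂ))/((a:ℂ) + Complex.I))) *
      Complex.exp ((a:ℂ)*((θ:ℂ)-(tm:ℂ))) ^ 2) * Complex.I_sq

lemma jump_aux_prod {M : ℕ} (m : Fin M) (u P D : ℂ) (c Q bR bL R : Fin M → ℂ)
    (hu : u * (starRingEnd ℂ) u = 1)
    (hkm : ∀ k, k ≠ m → bR k = bL k)
    (hDm : bR m - bL m = D) (hD : D ≠ 0)
    (hterm : ∀ k, (c m * (starRingEnd ℂ) (P * Q m)) *
        ((starRingEnd ℂ) (c k) * (P * Q k * ((bR k + bL k) / D))) = R k) :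
    (u * (∑ k, c k * (starRingEnd ℂ) (P * Q k * (bR k / D))) -
        u * (∑ k, c k * (starRingEnd ℂ) (P * Q k * (bL k / D)))) *
      (starRingEnd ℂ) (u * (∑ k, c k * (starRingEnd ℂ) (P * Q k * (bR k / D))) +
        u * (∑ k, c k * (starRingEnd ℂ) (P * Q k * (bL k / D)))) = ∑ k, R k := by
  have hdiff : u * (∑ k, c k * (starRingEnd ℂ) (P * Q k * (bR k / D))) -
      u * (∑ k, c k * (starRingEnd ℂ) (P * Q k * (bL k / D))) =
      u * (c m * (starRingEnd ℂ) (P * Q m)) := by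
    rw [← mul_sub, ← Finset.sum_sub_distrib]
    congr 1
    rw [Finset.sum_eq_single_of_mem m (Finset.mem_univ m)
      (fun k _ hk => by rw [hkm k hk, sub_self])]
    rw [← mul_sub, ← map_sub]
    have h : P * Q m * (bR m / D) - P * Q m * (bL m / D) = P * Q m * ((bR m - bL m) / D) := by
      ring
    rw [h, hDm, div_self hD, mul_one]
  have hsum : u * (∑ k, c k * (starRingEnd ℂ) (P * Q k * (bR k / D))) +
      u * (∑ k, c k * (starRingEnd ℂ) (P * Q k * (bL k / D))) =
      u * ∑ k, c k * (starRingEnd ℂ) (P * Q k * ((bR k + bL k) / D)) := by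
    rw [← mul_add, ← Finset.sum_add_distrib]
    congr 1
    refine Finset.sum_congr rfl fun k _ => ?_
    rw [← mul_add, ← map_add]
    congr 2
    ring
  rw [hdiff, hsum]
  have h2 : (starRingEnd ℂ) (u * ∑ k, c k * (starRingEnd ℂ) (P * Q k * ((bR k + bL k) / D))) =
      (starRingEnd ℂ) u *
        ∑ k, (starRingEnd ℂ) (c k * (starRingEnd ℂ) (P * Q k * ((bR k + bL k) / D))) := by
    rw [map_mul, map_sum]
  rw [h2]
  have h3 : u * (c m * (starRingEnd ℂ) (P * Q m)) *
      ((starRingEnd ℂ) u *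
        ∑ k, (starRingEnd ℂ) (c k * (starRingEnd ℂ) (P * Q k * ((bR k + bL k) / D)))) =
      (u * (starRingEnd ℂ) u) * ((c m * (starRingEnd ℂ) (P * Q m)) *
        ∑ k, (starRingEnd ℂ) (c k * (starRingEnd ℂ) (P * Q k * ((bR k + bL k) / D)))) := by
    ring
  rw [h3, hu, one_mul, Finset.mul_sum]
  refine Finset.sum_congr rfl fun k _ => ?_
  rw [map_mul (starRingEnd ℂ) (c k) ((starRingEnd ℂ) (P * Q k * ((bR k + bL k) / D))),
    Complex.conj_conj]
  exact hterm k

set_option maxHeartbeats 2000000 in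
/-- For every index `m` and every `θ ∈ ℝ`, the jump of the squared speed
across the `m`-th spiral satisfies
`|W^R(θ)|² − |W^L(θ)|² = −(4a²g_m e^{2a(θ−θ_m)}/(a²+1)) · Re((1/sinh(πA)) Σ_k 𝒜_{mk} g_k)`. -/
theorem speed_jump_across_spiral (a : ℝ) (ha : 0 < a) (M : ℕ) (hM : 1 ≤ M)
    (g θs : Fin M → ℝ) (hθ : StrictMono θs)
    (hθ0 : ∀ k : Fin M, θs k ∈ Set.Ico (0 : ℝ) (2 * Real.pi))
    (m : Fin M) (θ : ℝ) :
    ‖WR a M g θs m θ‖ ^ 2 - ‖WL a M g θs m θ‖ ^ 2 =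
      -(4 * a ^ 2 * g m * Real.exp (2 * a * (θ - θs m)) / (a ^ 2 + 1)) *
        ((1 / Complex.sinh ((Real.pi : ℂ) * Aconst a)) *
          ∑ k : Fin M, Amat a M θs m k * (g k : ℂ)).re := by
  -- basic nonvanishing facts
  have hAre : (Aconst a).re = -(2*a)/(a^2+1) := by
    simp [Aconst, Complex.div_re, Complex.normSq_apply]; ring
  have hne1 : Complex.exp (2 * (Real.pi:ℂ) * Aconst a) ≠ 1 := by
    intro h
    have h2 : ‖(Complex.exp (2 * (Real.pi:ℂ) * Aconst a))‖ = 1 := by rw [h]; simp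
    rw [Complex.norm_exp] at h2
    have hre : (2 * (Real.pi:ℂ) * Aconst a).re = 2 * Real.pi * (Aconst a).re := by
      simp [Complex.mul_re]
    rw [hre, hAre] at h2
    have h3 : 2 * Real.pi * (-(2*a)/(a^2+1)) < 0 := by
      have h5 : (0:ℝ) < 2 * Real.pi * (2*a/(a^2+1)) := by positivity
      have h6 : 2 * Real.pi * (-(2*a)/(a^2+1)) = -(2 * Real.pi * (2*a/(a^2+1))) := by ring
      linarith
    have := Real.exp_lt_one_iff.mpr h3
    linarith
  have hxne : Complex.exp ((Real.pi:ℂ) * Aconst a) ≠ 0 := Complex.exp_ne_zero _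
  have hx2 : Complex.exp (2 * (Real.pi:ℂ) * Aconst a) =
      Complex.exp ((Real.pi:ℂ) * Aconst a) * Complex.exp ((Real.pi:ℂ) * Aconst a) := by
    rw [← Complex.exp_add]
    exact congrArg Complex.exp (by ring)
  have h1mx : (1:ℂ) - Complex.exp ((Real.pi:ℂ) * Aconst a) *
      Complex.exp ((Real.pi:ℂ) * Aconst a) ≠ 0 := by
    rw [← hx2]; exact sub_ne_zero.mpr (Ne.symm hne1)
  have hsinh : Complex.sinh ((Real.pi:ℂ) * Aconst a) =
      (Complex.exp ((Real.pi:ℂ) * Aconst a) - (Complex.exp ((Real.pi:ℂ) * Aconst a))⁻¹)/2 := by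
    simp only [Complex.sinh, Complex.exp_neg]
  have hsne : Complex.sinh ((Real.pi:ℂ) * Aconst a) ≠ 0 := by
    rw [hsinh]; intro h; apply h1mx; field_simp at h; linear_combination -h
  have hD : (1:ℂ) - Complex.exp (2*(Real.pi:ℂ)*Aconst a) ≠ 0 :=
    sub_ne_zero.mpr (Ne.symm hne1)
  -- the indicator-to-bracket identity
  have hGB : ∀ k : Fin M,
      (Complex.exp (2*(Real.pi:ℂ)*(if k < m then 1 else 0)*Aconst a) +
        Complex.exp (2*(Real.pi:ℂ)*(if k ≤ m then 1 else 0)*Aconst a)) /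
        (1 - Complex.exp (2*(Real.pi:ℂ)*Aconst a)) =
      -(if m < k then Complex.exp (-(Real.pi:ℂ)*Aconst a)
        else if k = m then Complex.cosh ((Real.pi:ℂ)*Aconst a)
        else Complex.exp ((Real.pi:ℂ)*Aconst a)) / Complex.sinh ((Real.pi:ℂ)*Aconst a) := by
    intro k
    rcases lt_trichotomy k m with h|h|h
    · rw [if_pos h, if_pos h.le, if_neg (asymm h), if_neg (ne_of_lt h),
        mul_one (2*(Real.pi:ℂ)), hx2]
      exact jump_alg1 _ _ hxne h1mx hsinh hsne
    · rw [h, if_neg (lt_irrefl m), if_pos (le_refl m), if_neg (lt_irrefl m), if_pos rfl,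
        mul_zero (2*(Real.pi:ℂ)), zero_mul, Complex.exp_zero, mul_one (2*(Real.pi:ℂ)), hx2]
      rw [show Complex.cosh ((Real.pi:ℂ)*Aconst a) =
        (Complex.exp ((Real.pi:ℂ)*Aconst a) + (Complex.exp ((Real.pi:ℂ)*Aconst a))⁻¹)/2 by
          simp only [Complex.cosh, Complex.exp_neg]]
      exact jump_alg2 _ _ hxne h1mx hsinh hsne
    · rw [if_neg (asymm h), if_neg (not_le.mpr h), if_pos h,
        mul_zero (2*(Real.pi:ℂ)), zero_mul, Complex.exp_zero, hx2, neg_mul, Complex.exp_neg]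
      exact jump_alg3 _ _ hxne h1mx hsinh hsne
  -- hypotheses for the structural lemma
  have hu : Complex.exp (Complex.I*(θ:ℂ)) *
      (starRingEnd ℂ) (Complex.exp (Complex.I*(θ:ℂ))) = 1 := by
    rw [← Complex.exp_conj, ← Complex.exp_add]
    rw [show Complex.I*(θ:ℂ) + (starRingEnd ℂ) (Complex.I*(θ:ℂ)) = 0 by
      simp [Complex.conj_I]]
    exact Complex.exp_zero
  have hkm : ∀ k : Fin M, k ≠ m →
      Complex.exp (2*(Real.pi:ℂ)*(if k < m then 1 else 0)*Aconst a) =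
      Complex.exp (2*(Real.pi:ℂ)*(if k ≤ m then 1 else 0)*Aconst a) := by
    intro k hk
    have h : (k < m) = (k ≤ m) := propext ⟨le_of_lt, fun h2 => lt_of_le_of_ne h2 hk⟩
    simp only [h]
  have hDm : Complex.exp (2*(Real.pi:ℂ)*(if m < m then 1 else 0)*Aconst a) -
      Complex.exp (2*(Real.pi:ℂ)*(if m ≤ m then 1 else 0)*Aconst a) =
      1 - Complex.exp (2*(Real.pi:ℂ)*Aconst a) := by
    rw [if_neg (lt_irrefl m), if_pos (le_refl m), mul_zero (2*(Real.pi:ℂ)), zero_mul,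
      Complex.exp_zero, mul_one (2*(Real.pi:ℂ))]
  -- the termwise identity
  have hterm : ∀ k : Fin M,
      (2*(a:ℂ)*(g m:ℂ)/((Real.exp (a*(θ-θs m)):ℂ)*((a:ℂ)-Complex.I)) *
        (starRingEnd ℂ) (Complex.exp ((2*(a:ℂ)/((a:ℂ)+Complex.I)) * ((a*(θ-θs m):ℝ):ℂ)) *
          Complex.exp (Aconst a * ((θs m : ℂ) - (θ:ℂ))))) *
      ((starRingEnd ℂ) (2*(a:ℂ)*(g k:ℂ)/((Real.exp (a*(θ-θs m)):ℂ)*((a:ℂ)-Complex.I))) *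
        (Complex.exp ((2*(a:ℂ)/((a:ℂ)+Complex.I)) * ((a*(θ-θs m):ℝ):ℂ)) *
          Complex.exp (Aconst a * ((θs k : ℂ) - (θ:ℂ))) *
          ((Complex.exp (2*(Real.pi:ℂ)*(if k < m then 1 else 0)*Aconst a) +
            Complex.exp (2*(Real.pi:ℂ)*(if k ≤ m then 1 else 0)*Aconst a)) /
            (1 - Complex.exp (2*(Real.pi:ℂ)*Aconst a))))) =
      -((4*a^2*g m*Real.exp (2*a*(θ-θs m))/(a^2+1) : ℝ):ℂ) *
        ((1/Complex.sinh ((Real.pi:ℂ)*Aconst a)) * (Amat a M θs m k * (g k : ℂ))) := by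
    intro k
    rw [hGB k]
    have hcore := jump_core a θ (θs m) (θs k) (g m) (g k) ha
    have hre : ((4*a^2*(g m)*(g k)*Real.exp (2*a*(θ-θs m))/(a^2+1) : ℝ) : ℂ) =
        ((4*a^2*(g m)*Real.exp (2*a*(θ-θs m))/(a^2+1) : ℝ) : ℂ) * ((g k : ℝ) : ℂ) := by
      push_cast; ring
    rw [hre] at hcore
    simp only [Amat]
    linear_combination (-(if m < k then Complex.exp (-(Real.pi:ℂ)*Aconst a)
      else if k = m then Complex.cosh ((Real.pi:ℂ)*Aconst a)
      else Complex.exp ((Real.pi:ℂ)*Aconst a)) / Complex.sinh ((Real.pi:ℂ)*Aconst a)) * hcore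
  -- the product identity
  rw [jump_abs_sq]
  have hprod : (WR a M g θs m θ - WL a M g θs m θ) *
      (starRingEnd ℂ) (WR a M g θs m θ + WL a M g θs m θ) =
      -((4*a^2*g m*Real.exp (2*a*(θ-θs m))/(a^2+1) : ℝ):ℂ) *
        ((1/Complex.sinh ((Real.pi:ℂ)*Aconst a)) *
          ∑ k : Fin M, Amat a M θs m k * (g k : ℂ)) := by
    simp only [WR, WL]
    exact (jump_aux_prod m (Complex.exp (Complex.I*(θ:ℂ)))
      (Complex.exp ((2*(a:ℂ)/((a:ℂ)+Complex.I)) * ((a*(θ-θs m):ℝ):ℂ)))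
      (1 - Complex.exp (2*(Real.pi:ℂ)*Aconst a))
      (fun k => 2*(a:ℂ)*(g k : ℂ)/((Real.exp (a*(θ-θs m)):ℂ)*((a:ℂ)-Complex.I)))
      (fun k => Complex.exp (Aconst a * ((θs k : ℂ) - (θ:ℂ))))
      (fun k => Complex.exp (2*(Real.pi:ℂ)*(if k < m then 1 else 0)*Aconst a))
      (fun k => Complex.exp (2*(Real.pi:ℂ)*(if k ≤ m then 1 else 0)*Aconst a))
      (fun k => -((4*a^2*g m*Real.exp (2*a*(θ-θs m))/(a^2+1) : ℝ):ℂ) *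
        ((1/Complex.sinh ((Real.pi:ℂ)*Aconst a)) * (Amat a M θs m k * (g k : ℂ))))
      hu hkm hDm hD hterm).trans (by simp only [← Finset.mul_sum])
  rw [hprod, neg_mul, Complex.neg_re, Complex.re_ofReal_mul]
  push_cast
  ring
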